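/- Let N ⊴ B₃ of finite index with N ≤ PB₃, and suppose (m,f) ∈ ℤ × F₂ satisfies the hexagon relations modulo N and 2m+1 represents a unit in ℤ/N_ord ℤ, where N_ord = lcm(ord(x₁₂N), ord(x₂₃N), ord(cN)). Then the following are equivalent: (1) T_{m,f} : B₃ → B₃/N is surjective; (2) its restriction T_{m,f} : PB₃ → PB₃/N is surjective; (3) its restriction T_{m,f} : F₂ → F₂/(N ∩ F₂) is surjective. -/

import Mathlib

def braidRel : Set (FreeGroup (Fin 2)) :=
  {FreeGroup.of 0 * FreeGroup.of 1 * FreeGroup.of 0 *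
    (FreeGroup.of 1 * FreeGroup.of 0 * FreeGroup.of 1)⁻¹}

/-- The Artin braid group on 3 strands. -/
abbrev B3 := PresentedGroup braidRel

def σ₁ : B3 := PresentedGroup.of 0
def σ₂ : B3 := PresentedGroup.of 1

/-- The standard projection B₃ → S₃. -/
def ρ : B3 →* Equiv.Perm (Fin 3) :=
  PresentedGroup.toGroup (f := ![Equiv.swap 0 1, Equiv.swap 1 2]) (by
    intro r hr
    simp only [braidRel, Set.mem_singleton_iff] at hr
    subst hr
    simp only [map_mul, map_inv, FreeGroup.lift_apply_of]
    decide)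

/-- The pure braid group on 3 strands. -/
def PB3 : Subgroup B3 := ρ.ker

def c : B3 := (σ₁ * σ₂ * σ₁) ^ 2

abbrev F2 := FreeGroup (Fin 2)
def xx : F2 := FreeGroup.of 0
def yy : F2 := FreeGroup.of 1

/-- The identification of F₂ with ⟨σ₁², σ₂²⟩ ≤ PB₃. -/
def ι : F2 →* B3 := FreeGroup.lift ![σ₁ ^ 2, σ₂ ^ 2]

lemma braid : σ₁ * σ₂ * σ₁ = σ₂ * σ₁ * σ₂ := by
  have hmem : (FreeGroup.of 0 * FreeGroup.of 1 * FreeGroup.of 0 *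
      (FreeGroup.of 1 * FreeGroup.of 0 * FreeGroup.of 1)⁻¹ : FreeGroup (Fin 2)) ∈ braidRel := rfl
  have h1 : (PresentedGroup.mk braidRel) (FreeGroup.of 0 * FreeGroup.of 1 * FreeGroup.of 0 *
      (FreeGroup.of 1 * FreeGroup.of 0 * FreeGroup.of 1)⁻¹) = 1 := by
    show (QuotientGroup.mk _ : PresentedGroup braidRel) = 1
    rw [QuotientGroup.eq_one_iff]
    exact Subgroup.subset_normalClosure hmem
  simp only [map_mul, map_inv] at h1
  have : (σ₁ * σ₂ * σ₁) * (σ₂ * σ₁ * σ₂)⁻¹ = 1 := by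
    simpa [σ₁, σ₂, PresentedGroup.of, mul_assoc] using h1
  exact mul_inv_eq_one.mp (by simpa [mul_assoc] using this)

lemma ρσ₁ : ρ σ₁ = Equiv.swap 0 1 := by
  simp [ρ, σ₁, PresentedGroup.toGroup.of]

lemma ρσ₂ : ρ σ₂ = Equiv.swap 1 2 := by
  simp [ρ, σ₂, PresentedGroup.toGroup.of]

-- continuing
lemma c_def : c = (σ₁ * σ₂ * σ₁) * (σ₁ * σ₂ * σ₁) := by
  rw [show c = (σ₁ * σ₂ * σ₁) ^ 2 from rfl, pow_two]

lemma delta1 : (σ₁ * σ₂ * σ₁) * σ₁ = σ₂ * (σ₁ * σ₂ * σ₁) := by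
  conv_lhs => rw [braid]
  group

lemma delta2 : (σ₁ * σ₂ * σ₁) * σ₂ = σ₁ * (σ₁ * σ₂ * σ₁) := by
  conv_rhs => rw [braid]
  group

lemma c_comm_sigma1 : c * σ₁ = σ₁ * c := by
  calc c * σ₁ = (σ₁ * σ₂ * σ₁) * ((σ₁ * σ₂ * σ₁) * σ₁) := by rw [c_def]; group
  _ = (σ₁ * σ₂ * σ₁) * (σ₂ * (σ₁ * σ₂ * σ₁)) := by rw [delta1]
  _ = ((σ₁ * σ₂ * σ₁) * σ₂) * (σ₁ * σ₂ * σ₁) := by group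
  _ = (σ₁ * (σ₁ * σ₂ * σ₁)) * (σ₁ * σ₂ * σ₁) := by rw [delta2]
  _ = σ₁ * c := by rw [c_def]; group

lemma c_comm_sigma2 : c * σ₂ = σ₂ * c := by
  calc c * σ₂ = (σ₁ * σ₂ * σ₁) * ((σ₁ * σ₂ * σ₁) * σ₂) := by rw [c_def]; group
  _ = (σ₁ * σ₂ * σ₁) * (σ₁ * (σ₁ * σ₂ * σ₁)) := by rw [delta2]
  _ = ((σ₁ * σ₂ * σ₁) * σ₁) * (σ₁ * σ₂ * σ₁) := by group
  _ = (σ₂ * (σ₁ * σ₂ * σ₁)) * (σ₁ * σ₂ * σ₁) := by rw [delta1]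
  _ = σ₂ * c := by rw [c_def]; group

lemma c_central : ∀ g : B3, c * g = g * c := by
  intro g
  refine PresentedGroup.generated_by braidRel
    { carrier := {g | c * g = g * c}
      one_mem' := by simp
      mul_mem' := by
        intro x y hx hy
        simp only [Set.mem_setOf_eq] at *
        rw [← mul_assoc, hx, mul_assoc, hy, mul_assoc]
      inv_mem' := by
        intro x hx
        simp only [Set.mem_setOf_eq] at *
        calc c * x⁻¹ = x⁻¹ * (x * c) * x⁻¹ := by group
        _ = x⁻¹ * (c * x) * x⁻¹ := by rw [hx]
        _ = x⁻¹ * c := by group } ?_ g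
  intro j
  fin_cases j
  · exact c_comm_sigma1
  · exact c_comm_sigma2

lemma c_conj (g : B3) : g * c * g⁻¹ = c := by
  rw [← c_central]; group

lemma conj1 : σ₁ * σ₂ * σ₁⁻¹ = σ₂⁻¹ * σ₁ * σ₂ := by
  calc σ₁ * σ₂ * σ₁⁻¹ = σ₂⁻¹ * (σ₂ * σ₁ * σ₂) * σ₁⁻¹ := by group
  _ = σ₂⁻¹ * (σ₁ * σ₂ * σ₁) * σ₁⁻¹ := by rw [braid]
  _ = σ₂⁻¹ * σ₁ * σ₂ := by group

lemma conj2 : σ₂ * σ₁ * σ₂⁻¹ = σ₁⁻¹ * σ₂ * σ₁ := by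
  calc σ₂ * σ₁ * σ₂⁻¹ = σ₁⁻¹ * (σ₁ * σ₂ * σ₁) * σ₂⁻¹ := by group
  _ = σ₁⁻¹ * (σ₂ * σ₁ * σ₂) * σ₂⁻¹ := by rw [braid]
  _ = σ₁⁻¹ * σ₂ * σ₁ := by group

lemma C2 : c = σ₁*σ₂*σ₂*σ₁*σ₂*σ₂ := by
  calc c = (σ₁*σ₂*σ₁)*(σ₁*σ₂*σ₁) := c_def
  _ = (σ₁*σ₂*σ₁)*(σ₂*σ₁*σ₂) := congrArg (fun z => (σ₁*σ₂*σ₁) * z) braid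
  _ = σ₁*σ₂*((σ₁*σ₂*σ₁)*σ₂) := by group
  _ = σ₁*σ₂*((σ₂*σ₁*σ₂)*σ₂) := by rw [braid]
  _ = σ₁*σ₂*σ₂*σ₁*σ₂*σ₂ := by group

lemma C4 : c = σ₂*σ₁*σ₁*σ₂*σ₁*σ₁ := by
  calc c = (σ₁*σ₂*σ₁)*(σ₁*σ₂*σ₁) := c_def
  _ = (σ₂*σ₁*σ₂)*(σ₁*σ₂*σ₁) := congrArg (fun z => z * (σ₁*σ₂*σ₁)) braid
  _ = σ₂*σ₁*((σ₂*σ₁*σ₂)*σ₁) := by group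
  _ = σ₂*σ₁*((σ₁*σ₂*σ₁)*σ₁) := by rw [braid]
  _ = σ₂*σ₁*σ₁*σ₂*σ₁*σ₁ := by group

@[simp] lemma ι_xx : ι xx = σ₁ ^ 2 := by
  simp [ι, xx]

@[simp] lemma ι_yy : ι yy = σ₂ ^ 2 := by
  simp [ι, yy]

def rep : Fin 6 → B3
  | 0 => 1
  | 1 => σ₁
  | 2 => σ₂
  | 3 => σ₁ * σ₂
  | 4 => σ₂ * σ₁
  | 5 => σ₁ * σ₂ * σ₁

lemma step_s1 : ∀ i : Fin 6, ∃ (w : F2) (j : ℤ) (i' : Fin 6),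
    rep i * σ₁ = ι w * c ^ j * rep i' := by
  intro i
  fin_cases i
  · exact ⟨1, 0, 1, by simp [rep]⟩
  · exact ⟨xx, 0, 0, by simp [rep, pow_two]⟩
  · exact ⟨1, 0, 4, by simp [rep]⟩
  · exact ⟨1, 0, 5, by simp [rep]⟩
  · refine ⟨xx⁻¹ * yy⁻¹, 1, 2, ?_⟩
    have h : c = σ₂ * (σ₂*σ₁*σ₁*σ₂*σ₁*σ₁) * σ₂⁻¹ := by rw [← C4, c_conj]
    simp only [rep, map_mul, map_inv, ι_xx, ι_yy, zpow_one]
    rw [h]; simp only [pow_two]; group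
  · refine ⟨yy, 0, 3, ?_⟩
    simp only [rep, ι_yy, zpow_zero, mul_one]
    rw [delta1, braid]; simp only [pow_two, mul_assoc]

lemma step_s2 : ∀ i : Fin 6, ∃ (w : F2) (j : ℤ) (i' : Fin 6),
    rep i * σ₂ = ι w * c ^ j * rep i' := by
  intro i
  fin_cases i
  · exact ⟨1, 0, 2, by simp [rep]⟩
  · exact ⟨1, 0, 3, by simp [rep]⟩
  · exact ⟨yy, 0, 0, by simp [rep, pow_two]⟩
  · refine ⟨yy⁻¹ * xx⁻¹, 1, 1, ?_⟩
    have h : c = σ₁ * (σ₁*σ₂*σ₂*σ₁*σ₂*σ₂) * σ₁⁻¹ := by rw [← C2, c_conj]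
    simp only [rep, map_mul, map_inv, ι_xx, ι_yy, zpow_one]
    rw [h]; simp only [pow_two]; group
  · exact ⟨1, 0, 5, by simp only [rep, map_one, zpow_zero, mul_one, one_mul]; rw [braid]⟩
  · refine ⟨xx, 0, 4, ?_⟩
    simp only [rep, ι_xx, zpow_zero, mul_one]
    rw [delta2]; simp only [pow_two, mul_assoc]

lemma step_s1inv : ∀ i : Fin 6, ∃ (w : F2) (j : ℤ) (i' : Fin 6),
    rep i * σ₁⁻¹ = ι w * c ^ j * rep i' := by
  intro i
  fin_cases i
  · exact ⟨xx⁻¹, 0, 1, by simp [rep]; group⟩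
  · exact ⟨1, 0, 0, by simp [rep]⟩
  · refine ⟨yy * xx, -1, 4, ?_⟩
    simp only [rep, map_mul, ι_xx, ι_yy]
    rw [C4]; group
  · refine ⟨yy⁻¹, 0, 5, ?_⟩
    simp only [rep, map_inv, ι_yy, zpow_zero, mul_one]
    rw [conj1, braid]; group
  · exact ⟨1, 0, 2, by simp [rep]⟩
  · exact ⟨1, 0, 3, by simp only [rep, map_one, zpow_zero, mul_one, one_mul]; group⟩

lemma step_s2inv : ∀ i : Fin 6, ∃ (w : F2) (j : ℤ) (i' : Fin 6),
    rep i * σ₂⁻¹ = ι w * c ^ j * rep i' := by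
  intro i
  fin_cases i
  · exact ⟨yy⁻¹, 0, 2, by simp [rep]; group⟩
  · refine ⟨xx * yy, -1, 3, ?_⟩
    simp only [rep, map_mul, ι_xx, ι_yy]
    rw [C2]; group
  · exact ⟨1, 0, 0, by simp [rep]⟩
  · exact ⟨1, 0, 1, by simp only [rep, map_one, zpow_zero, mul_one, one_mul]; group⟩
  · refine ⟨xx⁻¹, 0, 5, ?_⟩
    simp only [rep, map_inv, ι_xx, zpow_zero, mul_one]
    rw [conj2]; group
  · exact ⟨1, 0, 4, by simp only [rep, map_one, zpow_zero, mul_one, one_mul]; rw [braid]; group⟩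

lemma assemble (v w : F2) (k j : ℤ) (r : B3) :
    ι v * c ^ k * (ι w * c ^ j * r) = ι (v * w) * c ^ (k + j) * r := by
  have hc : Commute c (ι w) := c_central (ι w)
  have hcom : c ^ k * ι w = ι w * c ^ k := (hc.zpow_left k).eq
  calc ι v * c ^ k * (ι w * c ^ j * r) = ι v * (c ^ k * ι w) * c ^ j * r := by
        simp [mul_assoc]
  _ = ι v * (ι w * c ^ k) * c ^ j * r := by rw [hcom]
  _ = ι (v * w) * c ^ (k + j) * r := by rw [map_mul, zpow_add]; simp [mul_assoc]

lemma closure_sigma_top : Subgroup.closure ({σ₁, σ₂} : Set B3) = ⊤ := by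
  have h : ({σ₁, σ₂} : Set B3) = Set.range (PresentedGroup.of : Fin 2 → B3) := by
    ext g
    constructor
    · rintro (rfl | rfl)
      exacts [⟨0, rfl⟩, ⟨1, rfl⟩]
    · rintro ⟨i, rfl⟩
      fin_cases i
      · exact Or.inl rfl
      · exact Or.inr rfl
  rw [h, PresentedGroup.closure_range_of]

lemma decomp (a : B3) : ∃ (v : F2) (k : ℤ) (i : Fin 6), a = ι v * c ^ k * rep i := by
  have ha : a ∈ Subgroup.closure ({σ₁, σ₂} : Set B3) := by
    rw [closure_sigma_top]; exact Subgroup.mem_top a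
  induction ha using Subgroup.closure_induction_right with
  | one => exact ⟨1, 0, 0, by simp [rep]⟩
  | mul_right x hx y hy ih =>
    obtain ⟨v, k, i, rfl⟩ := ih
    rcases hy with rfl | rfl
    · obtain ⟨w, j, i', hw⟩ := step_s1 i
      exact ⟨v * w, k + j, i', by rw [mul_assoc, hw, assemble]⟩
    · obtain ⟨w, j, i', hw⟩ := step_s2 i
      exact ⟨v * w, k + j, i', by rw [mul_assoc, hw, assemble]⟩
  | mul_inv_cancel x hx y hy ih =>
    obtain ⟨v, k, i, rfl⟩ := ih
    rcases hy with rfl | rfl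
    · obtain ⟨w, j, i', hw⟩ := step_s1inv i
      exact ⟨v * w, k + j, i', by rw [mul_assoc, hw, assemble]⟩
    · obtain ⟨w, j, i', hw⟩ := step_s2inv i
      exact ⟨v * w, k + j, i', by rw [mul_assoc, hw, assemble]⟩

lemma ρ_ι (w : F2) : ρ (ι w) = 1 := by
  have h : ρ.comp ι = 1 := by
    apply FreeGroup.ext_hom
    intro i
    fin_cases i
    · show ρ (ι xx) = 1
      rw [ι_xx, map_pow, ρσ₁]; decide
    · show ρ (ι yy) = 1
      rw [ι_yy, map_pow, ρσ₂]; decide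
  calc ρ (ι w) = (ρ.comp ι) w := rfl
  _ = 1 := by rw [h]; rfl

lemma ρ_c : ρ c = 1 := by
  rw [c_def]
  simp only [map_mul, ρσ₁, ρσ₂]
  decide

lemma mem_PB3_decomp (a : B3) (ha : a ∈ PB3) : ∃ (v : F2) (k : ℤ), a = ι v * c ^ k := by
  obtain ⟨v, k, i, hd⟩ := decomp a
  have hρ : ρ a = 1 := ha
  rw [hd] at hρ
  simp only [map_mul, map_zpow, ρ_ι, ρ_c, one_zpow, one_mul] at hρ
  fin_cases i
  · exact ⟨v, k, by simpa [rep] using hd⟩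
  all_goals (simp only [rep, map_mul, ρσ₁, ρσ₂] at hρ; exact absurd hρ (by decide))

lemma zpow_unit_mem {G : Type*} [Group G] (S : Subgroup G) (g : G) (t : ℤ)
    (hu : IsUnit ((t : ℤ) : ZMod (orderOf g))) (h : g ^ t ∈ S) : g ∈ S := by
  obtain ⟨b, hb⟩ := isUnit_iff_exists_inv.mp hu
  obtain ⟨k, rfl⟩ := ZMod.intCast_surjective b
  have h0 : ((t * k - 1 : ℤ) : ZMod (orderOf g)) = 0 := by
    push_cast
    rw [hb]
    ring
  rw [ZMod.intCast_zmod_eq_zero_iff_dvd] at h0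
  have h1 : g ^ (t * k - 1) = 1 := orderOf_dvd_iff_zpow_eq_one.mp h0
  have h2 : g = (g ^ t) ^ k := by
    rw [← zpow_mul]
    calc g = 1 * g := (one_mul g).symm
    _ = g ^ (t * k - 1) * g ^ (1 : ℤ) := by rw [h1, zpow_one]
    _ = g ^ (t * k - 1 + 1) := (zpow_add g _ _).symm
    _ = g ^ (t * k) := by ring_nf
  rw [h2]
  exact S.zpow_mem h k

section Main

variable (N : Subgroup B3) [N.Normal] (m : ℤ) (f : F2) (T : B3 →* B3 ⧸ N)

lemma surj_of_mems
    (hT1 : T σ₁ = QuotientGroup.mk' N (σ₁ ^ (2 * m + 1)))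
    (hT2 : T σ₂ = QuotientGroup.mk' N ((ι f)⁻¹ * σ₂ ^ (2 * m + 1) * ι f))
    (h1 : QuotientGroup.mk' N (σ₁ ^ 2) ∈ T.range)
    (h2 : QuotientGroup.mk' N (σ₂ ^ 2) ∈ T.range)
    (h3 : QuotientGroup.mk' N (ι f) ∈ T.range) :
    Function.Surjective T := by
  rw [← MonoidHom.range_eq_top]
  have hσ1 : QuotientGroup.mk' N σ₁ ∈ T.range := by
    have e : QuotientGroup.mk' N σ₁ = T σ₁ * (QuotientGroup.mk' N (σ₁ ^ 2)) ^ (-m) := by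
      rw [hT1, ← map_zpow, ← map_mul]
      congr 1
      group
    rw [e]
    exact mul_mem ⟨σ₁, rfl⟩ (T.range.zpow_mem h1 _)
  have hσ2 : QuotientGroup.mk' N σ₂ ∈ T.range := by
    have hconj : QuotientGroup.mk' N (ι f) *
        QuotientGroup.mk' N ((ι f)⁻¹ * σ₂ ^ (2 * m + 1) * ι f) *
        (QuotientGroup.mk' N (ι f))⁻¹ = QuotientGroup.mk' N (σ₂ ^ (2 * m + 1)) := by
      have h' : QuotientGroup.mk' N ((ι f)⁻¹ * σ₂ ^ (2 * m + 1) * ι f) =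
          (QuotientGroup.mk' N (ι f))⁻¹ * QuotientGroup.mk' N (σ₂ ^ (2 * m + 1)) *
            QuotientGroup.mk' N (ι f) := by
        simp only [map_mul, map_inv]
      rw [h']
      group
    have e : QuotientGroup.mk' N σ₂ =
        QuotientGroup.mk' N (ι f) * T σ₂ * (QuotientGroup.mk' N (ι f))⁻¹ *
          (QuotientGroup.mk' N (σ₂ ^ 2)) ^ (-m) := by
      rw [hT2, hconj, ← map_zpow, ← map_mul]
      congr 1
      group
    rw [e]
    exact mul_mem (mul_mem (mul_mem h3 ⟨σ₂, rfl⟩) (inv_mem h3)) (T.range.zpow_mem h2 _)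
  have hall : ∀ b : B3, QuotientGroup.mk' N b ∈ T.range := fun b =>
    PresentedGroup.generated_by braidRel (T.range.comap (QuotientGroup.mk' N))
      (fun j => by fin_cases j <;> [exact hσ1; exact hσ2]) b
  rw [eq_top_iff]
  rintro x -
  obtain ⟨b, rfl⟩ := QuotientGroup.mk'_surjective N x
  exact hall b

end Main

lemma odd_pow_invol {G : Type*} [Group G] (s : G) (m : ℤ) (h : s ^ (2:ℤ) = 1) :
    s ^ (2*m+1) = s := by
  rw [zpow_add, zpow_mul, h, one_zpow, one_mul, zpow_one]

lemma mem_PB3_of (a : B3) (h : ρ a = 1) : a ∈ PB3 := h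



/-- The pair (m, f) satisfies the two hexagon relations modulo N. -/
def Hex (N : Subgroup B3) [N.Normal] (m : ℤ) (f : F2) : Prop :=
  QuotientGroup.mk' N (σ₁ ^ (2 * m + 1) * (ι f)⁻¹ * σ₂ ^ (2 * m + 1) * ι f) =
      QuotientGroup.mk' N ((ι f)⁻¹ * σ₁ * σ₂ * (σ₁ ^ 2) ^ (-m) * c ^ m) ∧
  QuotientGroup.mk' N ((ι f)⁻¹ * σ₂ ^ (2 * m + 1) * ι f * σ₁ ^ (2 * m + 1)) =
      QuotientGroup.mk' N (σ₂ * σ₁ * (σ₂ ^ 2) ^ (-m) * c ^ m * ι f)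

/-- N_ord: the lcm of the orders of x₁₂N, x₂₃N and cN in B₃/N. -/
noncomputable def Nord (N : Subgroup B3) [N.Normal] : ℕ :=
  Nat.lcm
    (Nat.lcm (orderOf (QuotientGroup.mk' N (σ₁ ^ 2)))
      (orderOf (QuotientGroup.mk' N (σ₂ ^ 2))))
    (orderOf (QuotientGroup.mk' N c))

/-- The endomorphism E_{m,f} of F₂. -/
def Emap (m : ℤ) (f : F2) : F2 →* F2 :=
  FreeGroup.lift ![xx ^ (2 * m + 1), f⁻¹ * yy ^ (2 * m + 1) * f]

/-- [m, f] is a GT-shadow with target N and kernel (source) K. -/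
def IsShadow (K N : Subgroup B3) [N.Normal] (m : ℤ) (f : F2) : Prop :=
  Hex N m f ∧
  (∃ g ∈ commutator F2, g⁻¹ * f ∈ N.comap ι) ∧
  IsUnit ((2 * m + 1 : ℤ) : ZMod (Nord N)) ∧
  ∃ T : B3 →* B3 ⧸ N,
    T σ₁ = QuotientGroup.mk' N (σ₁ ^ (2 * m + 1)) ∧
    T σ₂ = QuotientGroup.mk' N ((ι f)⁻¹ * σ₂ ^ (2 * m + 1) * ι f) ∧
    Function.Surjective T ∧
    T.ker = K

/-- [m, f] is a GT-shadow with target N (with unspecified source). -/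
def IsShadowTgt (N : Subgroup B3) [N.Normal] (m : ℤ) (f : F2) : Prop :=
  ∃ K : Subgroup B3, IsShadow K N m f

/-- Equivalence of the three surjectivity conditions for T_{m,f}. -/
theorem surjectivity_tfae (N : Subgroup B3) [N.Normal] (hfin : N.FiniteIndex)
    (hle : N ≤ PB3) (m : ℤ) (f : F2) (hhex : Hex N m f)
    (hunit : IsUnit ((2 * m + 1 : ℤ) : ZMod (Nord N)))
    (T : B3 →* B3 ⧸ N)
    (hT1 : T σ₁ = QuotientGroup.mk' N (σ₁ ^ (2 * m + 1)))
    (hT2 : T σ₂ = QuotientGroup.mk' N ((ι f)⁻¹ * σ₂ ^ (2 * m + 1) * ι f)) :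
    List.TFAE
      [Function.Surjective T,
       ∀ b ∈ PB3, ∃ a ∈ PB3, T a = QuotientGroup.mk' N b,
       ∀ w : F2, ∃ v : F2, T (ι v) = QuotientGroup.mk' N (ι w)] := by
  have hker : ∀ x ∈ N, ρ x = 1 := fun x hx => hle hx
  have hρb : ∀ b : B3, (QuotientGroup.lift N ρ hker) (QuotientGroup.mk' N b) = ρ b :=
    fun b => rfl
  have hswap1 : (Equiv.swap (0:Fin 3) 1) ^ (2:ℤ) = 1 := by decide
  have hswap2 : (Equiv.swap (1:Fin 3) 2) ^ (2:ℤ) = 1 := by decide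
  have hρbT : ∀ g : B3, (QuotientGroup.lift N ρ hker) (T g) = ρ g := by
    intro g
    have hgen : ∀ j : Fin 2, PresentedGroup.of j ∈
        MonoidHom.eqLocus ((QuotientGroup.lift N ρ hker).comp T) ρ := by
      intro j
      fin_cases j
      · show (QuotientGroup.lift N ρ hker) (T σ₁) = ρ σ₁
        rw [hT1, hρb, map_zpow, ρσ₁]
        exact odd_pow_invol _ m hswap1
      · show (QuotientGroup.lift N ρ hker) (T σ₂) = ρ σ₂
        rw [hT2, hρb]
        simp only [map_mul, map_inv, map_zpow, ρ_ι, ρσ₂, inv_one, one_mul, mul_one]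
        exact odd_pow_invol _ m hswap2
    exact PresentedGroup.generated_by braidRel _ hgen g
  have hPB1 : (σ₁ ^ 2 : B3) ∈ PB3 := mem_PB3_of _ (by rw [map_pow, ρσ₁]; decide)
  have hPB2 : (σ₂ ^ 2 : B3) ∈ PB3 := mem_PB3_of _ (by rw [map_pow, ρσ₂]; decide)
  have hPBf : ι f ∈ PB3 := mem_PB3_of _ (ρ_ι f)
  tfae_have 1 → 2 := by
    intro h1 b hb
    obtain ⟨a, ha⟩ := h1 (QuotientGroup.mk' N b)
    refine ⟨a, mem_PB3_of a ?_, ha⟩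
    have h' : ρ a = ρ b := by rw [← hρbT a, ha, hρb]
    rw [h']
    exact hb
  tfae_have 2 → 3 := by
    intro h2 w
    obtain ⟨a1, -, ha1⟩ := h2 _ hPB1
    obtain ⟨a2, -, ha2⟩ := h2 _ hPB2
    obtain ⟨af, hafPB, haf⟩ := h2 _ hPBf
    have hsurj : Function.Surjective T :=
      surj_of_mems N m f T hT1 hT2 ⟨a1, ha1⟩ ⟨a2, ha2⟩ ⟨af, haf⟩
    have hTc : ∀ x : B3 ⧸ N, Commute (T c) x := by
      intro x
      obtain ⟨g, rfl⟩ := hsurj x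
      show T c * T g = T g * T c
      rw [← map_mul, ← map_mul, c_central g]
    have hdx : orderOf (QuotientGroup.mk' N (σ₁ ^ 2)) ∣ Nord N :=
      (Nat.dvd_lcm_left _ _).trans (Nat.dvd_lcm_left _ _)
    have hdy : orderOf (QuotientGroup.mk' N (σ₂ ^ 2)) ∣ Nord N :=
      (Nat.dvd_lcm_right _ _).trans (Nat.dvd_lcm_left _ _)
    have hux : IsUnit ((2*m+1 : ℤ) : ZMod (orderOf (QuotientGroup.mk' N (σ₁ ^ 2)))) := by
      have := hunit.map (ZMod.castHom hdx (ZMod (orderOf (QuotientGroup.mk' N (σ₁ ^ 2)))))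
      rwa [map_intCast] at this
    have huy : IsUnit ((2*m+1 : ℤ) : ZMod (orderOf (QuotientGroup.mk' N (σ₂ ^ 2)))) := by
      have := hunit.map (ZMod.castHom hdy (ZMod (orderOf (QuotientGroup.mk' N (σ₂ ^ 2)))))
      rwa [map_intCast] at this
    have hTx : (T.comp ι) xx = (QuotientGroup.mk' N (σ₁ ^ 2)) ^ (2*m+1) := by
      show T (ι xx) = _
      rw [ι_xx, map_pow, hT1, ← map_pow, ← map_zpow]
      congr 1
      group
    have hxQ : QuotientGroup.mk' N (σ₁ ^ 2) ∈ (T.comp ι).range :=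
      zpow_unit_mem _ _ _ hux ⟨xx, hTx⟩
    set F := QuotientGroup.mk' N (ι f) with hFdef
    set yb := QuotientGroup.mk' N (σ₂ ^ 2) with hybdef
    set y' := F⁻¹ * yb * F with hy'def
    have hmk2 : (QuotientGroup.mk' N (σ₂ ^ (2*m+1))) ^ (2:ℕ) = yb ^ (2*m+1) := by
      rw [hybdef, ← map_pow, ← map_zpow]
      congr 1
      group
    have hTy : (T.comp ι) yy = y' ^ (2*m+1) := by
      show T (ι yy) = _
      rw [ι_yy, map_pow, hT2]
      have hconj : QuotientGroup.mk' N ((ι f)⁻¹ * σ₂ ^ (2 * m + 1) * ι f) =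
          F⁻¹ * QuotientGroup.mk' N (σ₂ ^ (2*m+1)) * F := by
        rw [hFdef]
        simp only [map_mul, map_inv]
      have hA : ∀ x : B3 ⧸ N, F⁻¹ * x * F = (MulAut.conj F⁻¹) x := by
        intro x
        rw [MulAut.conj_apply, inv_inv]
      rw [hconj, hy'def, hA, hA, ← map_pow, ← map_zpow, hmk2]
    have hordy : orderOf y' = orderOf yb := by
      have hsc : SemiconjBy F⁻¹ yb y' := by
        show F⁻¹ * yb = y' * F⁻¹
        rw [hy'def]
        group
      exact (SemiconjBy.orderOf_eq _ hsc).symm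
    have huy' : IsUnit ((2*m+1 : ℤ) : ZMod (orderOf y')) := by
      rw [hordy]
      exact huy
    have hy'Q : y' ∈ (T.comp ι).range := zpow_unit_mem _ _ _ huy' ⟨yy, hTy⟩
    obtain ⟨v, k, hvk⟩ := mem_PB3_decomp af hafPB
    have hFTq : F = T (ι v) * (T c) ^ k := by
      rw [← haf, hvk, map_mul, map_zpow]
    have hyconj : yb = F * y' * F⁻¹ := by
      rw [hy'def]
      group
    have hstep : F * y' * F⁻¹ = T (ι v) * y' * (T (ι v))⁻¹ := by
      rw [hFTq]
      have hcy : (T c) ^ k * y' = y' * (T c) ^ k := ((hTc y').zpow_left k).eq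
      calc T (ι v) * (T c)^k * y' * (T (ι v) * (T c)^k)⁻¹
          = T (ι v) * ((T c)^k * y') * ((T c)^k)⁻¹ * (T (ι v))⁻¹ := by group
      _ = T (ι v) * (y' * (T c)^k) * ((T c)^k)⁻¹ * (T (ι v))⁻¹ := by rw [hcy]
      _ = T (ι v) * y' * (T (ι v))⁻¹ := by group
    have hybQ : yb ∈ (T.comp ι).range := by
      rw [hyconj, hstep]
      exact mul_mem (mul_mem ⟨v, rfl⟩ hy'Q) (inv_mem ⟨v, rfl⟩)
    have hwQ : QuotientGroup.mk' N (ι w) ∈ (T.comp ι).range := by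
      have hle' : Subgroup.closure (Set.range (FreeGroup.of : Fin 2 → F2)) ≤
          ((T.comp ι).range).comap ((QuotientGroup.mk' N).comp ι) := by
        rw [Subgroup.closure_le]
        rintro g ⟨i, rfl⟩
        fin_cases i
        · show (QuotientGroup.mk' N) (ι xx) ∈ (T.comp ι).range
          rw [ι_xx]
          exact hxQ
        · show (QuotientGroup.mk' N) (ι yy) ∈ (T.comp ι).range
          rw [ι_yy]
          exact hybQ
      exact hle' (by rw [FreeGroup.closure_range_of]; trivial)
    obtain ⟨v', hv'⟩ := hwQ
    exact ⟨v', hv'⟩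
  tfae_have 3 → 1 := by
    intro h3
    obtain ⟨vx, hvx⟩ := h3 xx
    obtain ⟨vy, hvy⟩ := h3 yy
    obtain ⟨vf, hvf⟩ := h3 f
    exact surj_of_mems N m f T hT1 hT2
      ⟨ι vx, by rw [hvx, ι_xx]⟩ ⟨ι vy, by rw [hvy, ι_yy]⟩ ⟨ι vf, hvf⟩
  tfae_finish
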